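/- For the one-dimensional damped wave boundary eigenvalue problem with wave speed c > 0, interval length L > 0 and feedback gain ξ with 0 < ξ < c, a complex number λ admits a nonzero C² function v : [0,L] → ℂ satisfying c² v''(x) = λ² v(x) on [0,L], v(0) = 0, and c² v'(L) = −ξ λ v(L) if and only if λ = −(c/(2L))·ln((c+ξ)/(c−ξ)) + ((2k+1)π c/(2L))·i for some integer k. -/

import Mathlib

open Set Complex


lemma key_iff (c L ξ : ℝ) (hc : 0 < c) (hL : 0 < L) (hξ0 : 0 < ξ) (hξc : ξ < c) (lam : ℂ) :
    Complex.exp (2 * (lam / c) * L) = ((ξ:ℂ) - c) / ((ξ:ℂ) + c) ↔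
    ∃ k : ℤ, lam = ((-(c/(2*L)) * Real.log ((c+ξ)/(c-ξ)) : ℝ) : ℂ) +
      (((2*(k:ℝ)+1) * Real.pi * c / (2*L) : ℝ) : ℂ) * Complex.I := by
  have hcξ : (0:ℝ) < c - ξ := by linarith
  have hcξ' : (0:ℝ) < c + ξ := by linarith
  set r : ℝ := (c - ξ)/(c + ξ) with hrdef
  have hr : 0 < r := div_pos hcξ hcξ'
  have hlog : Real.log ((c+ξ)/(c-ξ)) = - Real.log r := by
    rw [hrdef, ← Real.log_inv, inv_div]
  have hca : ((ξ:ℂ) + c) ≠ 0 := by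
    have : ((ξ:ℝ) + c) ≠ 0 := by positivity
    exact_mod_cast fun h => this (by exact_mod_cast h)
  have hw : ((ξ:ℂ) - c) / ((ξ:ℂ) + c) = Complex.exp ((Real.log r : ℂ) + Real.pi * I) := by
    rw [Complex.exp_add, Complex.exp_pi_mul_I]
    have : Complex.exp ((Real.log r : ℂ)) = (r : ℂ) := by
      rw [← Complex.ofReal_exp, Real.exp_log hr]
    rw [this, hrdef]
    have hca2 : ((c:ℂ) + ξ) ≠ 0 := by
      have : ((c:ℝ) + ξ) ≠ 0 := by positivity
      exact_mod_cast fun h => this (by exact_mod_cast h)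
    push_cast
    rw [show ((ξ:ℂ)+c) = ((c:ℂ)+ξ) from by ring, show ((ξ:ℂ)-c) = -((c:ℂ)-ξ) from by ring,
      neg_div]
    ring
  rw [hw, Complex.exp_eq_exp_iff_exists_int]
  have hc0 : (c:ℂ) ≠ 0 := by exact_mod_cast hc.ne'
  have hL0 : (L:ℂ) ≠ 0 := by exact_mod_cast hL.ne'
  constructor
  · rintro ⟨n, hn⟩
    refine ⟨n, ?_⟩
    rw [hlog]
    push_cast
    field_simp at hn ⊢
    ring_nf at hn ⊢
    linear_combination hn
  · rintro ⟨k, hk⟩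
    refine ⟨k, ?_⟩
    rw [hlog] at hk
    push_cast at hk
    field_simp at hk ⊢
    ring_nf at hk ⊢
    linear_combination hk


lemma const_on_Icc {L : ℝ} (f f' : ℝ → ℂ)
    (hf : ∀ x ∈ Icc (0:ℝ) L, HasDerivWithinAt f (f' x) (Icc 0 L) x)
    (h0 : ∀ x ∈ Icc (0:ℝ) L, f' x = 0) : ∀ x ∈ Icc (0:ℝ) L, f x = f 0 := by
  have hcont : ContinuousOn f (Icc 0 L) := fun x hx => (hf x hx).continuousWithinAt
  apply constant_of_has_deriv_right_zero hcont
  intro x hx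
  have h := hf x (Ico_subset_Icc_self hx)
  rw [h0 x (Ico_subset_Icc_self hx)] at h
  exact h.mono_of_mem_nhdsWithin (Icc_mem_nhdsGE_of_mem hx)

lemma exp_deriv (m : ℂ) (x : ℝ) :
    HasDerivAt (fun x : ℝ => Complex.exp (m * x)) (Complex.exp (m * x) * m) x := by
  have h : HasDerivAt (fun x : ℝ => (m * x : ℂ)) m x := by
    simpa using (Complex.ofRealCLM.hasDerivAt.const_mul m)
  exact h.cexp

lemma dw_fwd (c L ξ : ℝ) (hc : 0 < c) (hL : 0 < L)
    (hξ0 : 0 < ξ) (hξc : ξ < c) (lam : ℂ)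
    (v v' v'' : ℝ → ℂ)
    (hv1 : ∀ x ∈ Icc (0:ℝ) L, HasDerivWithinAt v (v' x) (Icc 0 L) x)
    (hv2 : ∀ x ∈ Icc (0:ℝ) L, HasDerivWithinAt v' (v'' x) (Icc 0 L) x)
    (x0 : ℝ) (hx0 : x0 ∈ Icc (0:ℝ) L) (hx0ne : v x0 ≠ 0)
    (hode : ∀ x ∈ Icc (0:ℝ) L, (c^2 : ℂ) * v'' x = lam^2 * v x)
    (hv0 : v 0 = 0)
    (hbc : (c^2 : ℂ) * v' L = -(ξ : ℂ) * lam * v L) :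
    Complex.exp (2 * (lam / c) * L) = ((ξ:ℂ) - c) / ((ξ:ℂ) + c) := by
  have hc0 : (c:ℂ) ≠ 0 := by exact_mod_cast hc.ne'
  have hc2 : ((c:ℂ))^2 ≠ 0 := pow_ne_zero _ hc0
  set m : ℂ := lam / c with hm
  have hlam : lam = m * c := by rw [hm]; field_simp
  have hode' : ∀ x ∈ Icc (0:ℝ) L, v'' x = m^2 * v x := by
    intro x hx
    have h := hode x hx
    rw [hlam] at h
    apply mul_left_cancel₀ hc2
    rw [h]; ring
  set A : ℂ := v' 0 with hA
  have hmem0 : (0:ℝ) ∈ Icc (0:ℝ) L := left_mem_Icc.2 hL.le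
  have hmemL : L ∈ Icc (0:ℝ) L := right_mem_Icc.2 hL.le
  -- (v' - m v) e^{m x} is constant = A
  have hFconst := const_on_Icc (fun x => (v' x - m * v x) * Complex.exp (m * x))
      (fun x => (v'' x - m * v' x) * Complex.exp (m * x)
        + (v' x - m * v x) * (Complex.exp (m * x) * m))
      (fun x hx => ((hv2 x hx).sub ((hv1 x hx).const_mul m)).mul (exp_deriv m x).hasDerivWithinAt)
      (fun x hx => by
        have h := hode' x hx
        linear_combination Complex.exp (m * x) * h)
  have q1 : ∀ x ∈ Icc (0:ℝ) L, (v' x - m * v x) * Complex.exp (m * x) = A := by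
    intro x hx
    have h := hFconst x hx
    rw [h]; simp [hv0, hA]
  -- (v' + m v) e^{-m x} is constant = A
  have hPconst := const_on_Icc (fun x => (v' x + m * v x) * Complex.exp (-m * x))
      (fun x => (v'' x + m * v' x) * Complex.exp (-m * x)
        + (v' x + m * v x) * (Complex.exp (-m * x) * (-m)))
      (fun x hx => ((hv2 x hx).add ((hv1 x hx).const_mul m)).mul
        (exp_deriv (-m) x).hasDerivWithinAt)
      (fun x hx => by
        have h := hode' x hx
        linear_combination Complex.exp (-m * x) * h)
  have q2 : ∀ x ∈ Icc (0:ℝ) L, (v' x + m * v x) * Complex.exp (-m * x) = A := by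
    intro x hx
    have h := hPconst x hx
    rw [h]; simp [hv0, hA]
  have eprod : ∀ x : ℝ, Complex.exp (m * x) * Complex.exp (-m * x) = 1 := by
    intro x
    rw [← Complex.exp_add, show m * (x:ℂ) + -m * x = 0 by ring, Complex.exp_zero]
  -- m ≠ 0
  have hm0 : m ≠ 0 := by
    intro hm0
    have hlam0 : lam = 0 := by rw [hlam, hm0, zero_mul]
    have hu_eq' : ∀ x ∈ Icc (0:ℝ) L, v' x = A := by
      intro x hx
      have h := q1 x hx
      rw [hm0] at h
      simpa using h
    have hA0 : A = 0 := by
      have h := hbc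
      rw [hlam0] at h
      simp only [mul_zero, zero_mul, mul_comm, neg_zero] at h
      have : v' L = 0 := by
        rcases mul_eq_zero.1 (by linear_combination h : ((c:ℂ)^2) * v' L = 0) with h' | h'
        · exact absurd h' hc2
        · exact h'
      rw [← hu_eq' L hmemL, this]
    have hGconst := const_on_Icc (fun x => v x - A * x) (fun x => v' x - A)
      (fun x hx => (hv1 x hx).sub (by
        simpa using (Complex.ofRealCLM.hasDerivAt.const_mul A).hasDerivWithinAt))
      (fun x hx => by simp [hu_eq' x hx])
    have hvx0 : v x0 = 0 := by
      have h := hGconst x0 hx0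
      simp only [hv0, hA0, zero_mul, sub_zero, Complex.ofReal_zero, mul_zero, zero_sub,
        neg_zero] at h
      simpa [hA0] using h
    exact hx0ne hvx0
  -- A ≠ 0
  have hAne : A ≠ 0 := by
    intro hA0
    have h1 : v' x0 - m * v x0 = 0 := by
      rcases mul_eq_zero.1 ((q1 x0 hx0).trans hA0) with h | h
      · exact h
      · exact absurd h (Complex.exp_ne_zero _)
    have h2 : v' x0 + m * v x0 = 0 := by
      rcases mul_eq_zero.1 ((q2 x0 hx0).trans hA0) with h | h
      · exact h
      · exact absurd h (Complex.exp_ne_zero _)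
    have : m * v x0 = 0 := by linear_combination (h2 - h1) / 2
    rcases mul_eq_zero.1 this with h | h
    · exact hm0 h
    · exact hx0ne h
  -- v L ≠ 0
  have hvL : v L ≠ 0 := by
    intro hvL0
    have hv'L : v' L = 0 := by
      have h := hbc
      rw [hvL0, mul_zero] at h
      rcases mul_eq_zero.1 h with h' | h'
      · exact absurd h' hc2
      · exact h'
    have := q1 L hmemL
    rw [hv'L, hvL0, mul_zero, sub_zero, zero_mul] at this
    exact hAne this.symm
  set E : ℂ := Complex.exp (m * L) with hE
  set F : ℂ := Complex.exp (-m * L) with hF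
  have hq1 : (v' L - m * v L) * E = A := q1 L hmemL
  have hq2 : (v' L + m * v L) * F = A := q2 L hmemL
  have he1 : E * F = 1 := eprod L
  have hbcm : (c:ℂ)^2 * v' L = -(ξ:ℂ) * (m * c) * v L := by rw [← hlam]; exact hbc
  have key : m * (c:ℂ) * v L * (((c:ℂ) - ξ) + ((ξ:ℂ) + c) * (E * E)) = 0 := by
    linear_combination ((c:ℂ)^2 * E) * hq2 - ((c:ℂ)^2 * E) * hq1
      - ((c:ℂ)^2 * (v' L + m * v L)) * he1 - (1 - E * E) * hbcm
  have hfac : ((c:ℂ) - ξ) + ((ξ:ℂ) + c) * (E * E) = 0 := by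
    rcases mul_eq_zero.1 key with h | h
    · rcases mul_eq_zero.1 h with h' | h'
      · rcases mul_eq_zero.1 h' with h'' | h''
        · exact absurd h'' hm0
        · exact absurd h'' hc0
      · exact absurd h' hvL
    · exact h
  have hca : ((ξ:ℂ) + c) ≠ 0 := by
    have h1 : ((ξ:ℝ) + c) ≠ 0 := by positivity
    exact_mod_cast fun h => h1 (by exact_mod_cast h)
  have hEE : E * E = ((ξ:ℂ) - c) / ((ξ:ℂ) + c) := by
    field_simp
    linear_combination hfac
  rw [show (2 * (lam / ↑c) * (L:ℂ)) = m * L + m * L by rw [hm]; ring, Complex.exp_add]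
  exact hEE

lemma dw_bwd (c L ξ : ℝ) (hc : 0 < c) (hL : 0 < L)
    (hξ0 : 0 < ξ) (hξc : ξ < c) (lam : ℂ)
    (hexpc : Complex.exp (2 * (lam / c) * L) = ((ξ:ℂ) - c) / ((ξ:ℂ) + c)) :
    (∃ v v' v'' : ℝ → ℂ,
      (∀ x ∈ Icc (0:ℝ) L, HasDerivWithinAt v (v' x) (Icc 0 L) x) ∧
      (∀ x ∈ Icc (0:ℝ) L, HasDerivWithinAt v' (v'' x) (Icc 0 L) x) ∧
      ContinuousOn v'' (Icc 0 L) ∧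
      (∃ x ∈ Icc (0:ℝ) L, v x ≠ 0) ∧
      (∀ x ∈ Icc (0:ℝ) L, (c^2 : ℂ) * v'' x = lam^2 * v x) ∧
      v 0 = 0 ∧
      (c^2 : ℂ) * v' L = -(ξ : ℂ) * lam * v L) := by
  have hc0 : (c:ℂ) ≠ 0 := by exact_mod_cast hc.ne'
  set m : ℂ := lam / c with hm
  have hlam : lam = m * c := by rw [hm]; field_simp
  have hca : ((ξ:ℂ) + c) ≠ 0 := by
    have h1 : ((ξ:ℝ) + c) ≠ 0 := by positivity
    exact_mod_cast fun h => h1 (by exact_mod_cast h)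
  have hEE : Complex.exp (m * L) * Complex.exp (m * L) = ((ξ:ℂ) - c) / ((ξ:ℂ) + c) := by
    rw [← Complex.exp_add, show m * (L:ℂ) + m * L = 2 * (lam / c) * L by rw [hm]; ring]
    exact hexpc
  have hEE' : Complex.exp (m * L) * Complex.exp (m * L) * ((ξ:ℂ) + c) = (ξ:ℂ) - c :=
    (eq_div_iff hca).1 hEE
  have eprod : ∀ x : ℝ, Complex.exp (m * x) * Complex.exp (-m * x) = 1 := by
    intro x
    rw [← Complex.exp_add, show m * (x:ℂ) + -m * x = 0 by ring, Complex.exp_zero]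
  refine ⟨fun x => Complex.exp (m * x) - Complex.exp (-m * x),
    fun x => Complex.exp (m * x) * m - Complex.exp (-m * x) * (-m),
    fun x => Complex.exp (m * x) * m * m - Complex.exp (-m * x) * (-m) * (-m),
    fun x _ => ((exp_deriv m x).sub (exp_deriv (-m) x)).hasDerivWithinAt,
    fun x _ => (((exp_deriv m x).mul_const m).sub
      ((exp_deriv (-m) x).mul_const (-m))).hasDerivWithinAt,
    ?_, ⟨L, right_mem_Icc.2 hL.le, ?_⟩, ?_, ?_, ?_⟩
  · apply Continuous.continuousOn
    fun_prop
  · -- v L ≠ 0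
    intro h
    rw [sub_eq_zero] at h
    have h1 : Complex.exp (m * L) * Complex.exp (m * L) = 1 := by
      nth_rewrite 2 [h]
      exact eprod L
    rw [hEE] at h1
    have h2 : ((ξ - c)/(ξ + c) : ℝ) = 1 := by
      apply Complex.ofReal_injective
      push_cast
      exact h1
    have h3 : ((ξ - c)/(ξ + c) : ℝ) < 0 :=
      div_neg_of_neg_of_pos (by linarith) (by linarith)
    linarith
  · intro x _
    rw [hlam]; ring
  · norm_num
  · rw [hlam]
    have hT : Complex.exp (m * L) *
        (((c:ℂ)^2 * (Complex.exp (m * L) * m - Complex.exp (-m * L) * (-m))) -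
          (-(ξ:ℂ) * (m * c) * (Complex.exp (m * L) - Complex.exp (-m * L)))) = 0 := by
      linear_combination ((c:ℂ)^2 * m - (ξ:ℂ) * m * c) * eprod L + m * c * hEE'
    rcases mul_eq_zero.1 hT with h | h
    · exact absurd h (Complex.exp_ne_zero _)
    · linear_combination h


/-- λ is an eigenvalue of the boundary-damped wave operator
(i.e. admits a nonzero C² eigenfunction) iff
λ = −(c/(2L))·ln((c+ξ)/(c−ξ)) + ((2k+1)πc/(2L))·i for some integer k. -/
theorem damped_wave_eigenvalues (c L ξ : ℝ) (hc : 0 < c) (hL : 0 < L)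
    (hξ0 : 0 < ξ) (hξc : ξ < c) (lam : ℂ) :
    (∃ v v' v'' : ℝ → ℂ,
      (∀ x ∈ Icc (0:ℝ) L, HasDerivWithinAt v (v' x) (Icc 0 L) x) ∧
      (∀ x ∈ Icc (0:ℝ) L, HasDerivWithinAt v' (v'' x) (Icc 0 L) x) ∧
      ContinuousOn v'' (Icc 0 L) ∧
      (∃ x ∈ Icc (0:ℝ) L, v x ≠ 0) ∧
      (∀ x ∈ Icc (0:ℝ) L, (c^2 : ℂ) * v'' x = lam^2 * v x) ∧
      v 0 = 0 ∧
      (c^2 : ℂ) * v' L = -(ξ : ℂ) * lam * v L) ↔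
    ∃ k : ℤ, lam = ((-(c/(2*L)) * Real.log ((c+ξ)/(c-ξ)) : ℝ) : ℂ) +
      (((2*(k:ℝ)+1) * Real.pi * c / (2*L) : ℝ) : ℂ) * Complex.I := by
  constructor
  · rintro ⟨v, v', v'', hv1, hv2, -, ⟨x0, hx0, hx0ne⟩, hode, hv0, hbc⟩
    exact (key_iff c L ξ hc hL hξ0 hξc lam).1
      (dw_fwd c L ξ hc hL hξ0 hξc lam v v' v'' hv1 hv2 x0 hx0 hx0ne hode hv0 hbc)
  · intro hk
    exact dw_bwd c L ξ hc hL hξ0 hξc lam ((key_iff c L ξ hc hL hξ0 hξc lam).2 hk)
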